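/- (Euler identity specialization) For indices and entries c_1, c_2, ..., the identity K_{j-i}(c_{i+1},...,c_j) K_{l-j-1}(c_{j+1},...,c_{l-1}) = K_{j-i-1}(c_{i+1},...,c_{j-1}) K_{l-j-2}(c_{j+2},...,c_{l-1}) + K_{l-i-1}(c_{i+1},...,c_{l-1}) holds. -/

import Mathlib

/-- auxiliary continuant, head recursion (applied to reversed lists). -/
def contAux : List ℂ → ℂ
  | [] => 1
  | [c] => c
  | c :: d :: cs => c * contAux (d :: cs) - contAux cs

/-- Continuant K, satisfying K(c₁,…,cₙ) = cₙ K(c₁,…,cₙ₋₁) - K(c₁,…,cₙ₋₂). -/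
def cont (l : List ℂ) : ℂ := contAux l.reverse

/-- auxiliary K⁺, head recursion (applied to reversed lists). -/
def contPlusAux : List ℂ → ℂ
  | [] => 1
  | [c] => c
  | c :: d :: cs => c * contPlusAux (d :: cs) + contPlusAux cs

/-- Continuant K⁺, satisfying K⁺(c₁,…,cₙ) = cₙ K⁺(c₁,…,cₙ₋₁) + K⁺(c₁,…,cₙ₋₂). -/
def contPlus (l : List ℂ) : ℂ := contPlusAux l.reverse

/-- Continuant with an integer index (first k entries of the sequence c),
with the convention K₋₁ = 0. -/
noncomputable def contZ (c : ℕ → ℂ) (k : ℤ) : ℂ :=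
  if k < 0 then 0 else cont (List.ofFn fun j : Fin k.toNat => c j.1)

lemma contAux_key : ∀ (B : List ℂ) (x y : ℂ) (A : List ℂ),
    contAux (x :: A) * contAux (B ++ [y]) =
      contAux A * contAux B + contAux (B ++ y :: x :: A)
  | [], x, y, A => by
    simp only [List.nil_append, contAux]
    cases A with
    | nil => simp [contAux]; ring
    | cons a as => simp [contAux]; ring
  | [b], x, y, A => by
    simp only [List.cons_append, List.nil_append, contAux]
    cases A with
    | nil => simp [contAux]; ring
    | cons a as => simp [contAux]; ring
  | b1 :: b2 :: cs, x, y, A => by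
    have h1 := contAux_key (b2 :: cs) x y A
    have h2 := contAux_key cs x y A
    simp only [List.cons_append, contAux] at h1 h2 ⊢
    linear_combination b1 * h1 - h2
  termination_by B => B.length

lemma cont_key (A B : List ℂ) (x y : ℂ) :
    cont (A ++ [x]) * cont (y :: B) = cont A * cont B + cont (A ++ x :: y :: B) := by
  have := contAux_key B.reverse x y A.reverse
  simpa [cont, List.reverse_append] using this

lemma ofFn_shift (c : ℕ → ℂ) : ∀ (n s : ℕ),
    (List.ofFn fun m : Fin n => c (s + m)) = (List.range' s n).map c
  | 0, s => by simp
  | n + 1, s => by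
    rw [List.range'_succ, List.ofFn_succ]
    simp only [List.map_cons, Fin.val_zero, Nat.add_zero]
    congr 1
    · rw [← ofFn_shift c n (s + 1)]
      congr 1
      funext m
      simp [Nat.add_assoc, Nat.add_comm 1 m.1]

lemma contZ_eq (c : ℕ → ℂ) (s n : ℕ) :
    contZ (fun m => c (s + m)) (n : ℤ) = cont ((List.range' s n).map c) := by
  have : ¬ ((n : ℤ) < 0) := by omega
  simp only [contZ, if_neg this, Int.toNat_natCast]
  rw [ofFn_shift]

lemma contZ_neg (c : ℕ → ℂ) (k : ℤ) (h : k < 0) : contZ c k = 0 := by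
  simp [contZ, h]

theorem euler_identity_special (c : ℕ → ℂ) (i j l : ℕ) (h1 : i < j) (h2 : j < l) :
    contZ (fun m => c (i + 1 + m)) ((j : ℤ) - i) *
        contZ (fun m => c (j + 1 + m)) ((l : ℤ) - j - 1) =
      contZ (fun m => c (i + 1 + m)) ((j : ℤ) - i - 1) *
          contZ (fun m => c (j + 2 + m)) ((l : ℤ) - j - 2) +
        contZ (fun m => c (i + 1 + m)) ((l : ℤ) - i - 1) := by
  have e1 : (j : ℤ) - i = ((j - i : ℕ) : ℤ) := by omega
  have e2 : (j : ℤ) - i - 1 = ((j - i - 1 : ℕ) : ℤ) := by omega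
  have e3 : (l : ℤ) - j - 1 = ((l - j - 1 : ℕ) : ℤ) := by omega
  have e5 : (l : ℤ) - i - 1 = ((l - i - 1 : ℕ) : ℤ) := by omega
  rcases Nat.lt_or_ge (j + 1) l with hl | hl
  · -- l ≥ j + 2
    have e4 : (l : ℤ) - j - 2 = ((l - j - 2 : ℕ) : ℤ) := by omega
    rw [e2, e1, e4, e3, e5, contZ_eq, contZ_eq, contZ_eq, contZ_eq, contZ_eq]
    have r1 : List.range' (i+1) (j-i) = List.range' (i+1) (j-i-1) ++ [j] := by
      have h : j - i = (j - i - 1) + 1 := by omega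
      rw [h, List.range'_concat]
      congr 2
      omega
    have r2 : List.range' (j+1) (l-j-1) = (j+1) :: List.range' (j+1+1) (l-j-2) := by
      have h : l - j - 1 = (l - j - 2) + 1 := by omega
      rw [h, List.range'_succ]
    have r3 : List.range' (i+1) (l-i-1) =
        List.range' (i+1) (j-i-1) ++ j :: (j+1) :: List.range' (j+1+1) (l-j-2) := by
      have key := List.range'_append (s := i+1) (m := j-i-1) (n := (l-j-2)+1+1) (step := 1)
      rw [Nat.add_comm (j-i-1) ((l-j-2)+1+1)] at key
      rw [show i+1+1*(j-i-1) = j by omega] at key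
      rw [List.range'_succ, List.range'_succ] at key
      rw [show (l-j-2)+1+1+(j-i-1) = l-i-1 by omega] at key
      rw [show j + 1 * 1 = j + 1 by ring] at key
      rw [show j + 1 + 1 * 1 = j + 1 + 1 by ring] at key
      exact key.symm
    rw [r1, r2, r3]
    simp only [List.map_append, List.map_cons, List.map_nil]
    exact cont_key _ _ _ _
  · -- l = j + 1
    have hl1 : l = j + 1 := by omega
    subst hl1
    have z1 : contZ (fun m => c (j + 2 + m)) (((j+1 : ℕ) : ℤ) - j - 2) = 0 :=
      contZ_neg _ _ (by omega)
    have z2 : (((j+1 : ℕ) : ℤ)) - j - 1 = ((0 : ℕ) : ℤ) := by omega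
    have z3 : (((j+1 : ℕ) : ℤ)) - i - 1 = (j : ℤ) - i := by omega
    rw [z1, z2, z3, mul_zero, zero_add]
    have : contZ (fun m => c (j + 1 + m)) ((0 : ℕ) : ℤ) = 1 := by
      rw [contZ_eq]
      rfl
    rw [this, mul_one]
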